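/- Let b : ℝ → ℝ be locally Lipschitz, nonnegative and nondecreasing, let t₀ ∈ ℝ and α, β > 0, and set T(α,β) := ∫_α^∞ ds / (β² + 2∫_α^s b(r) dr)^{1/2} (with the convention 1/0 = ∞). If T₁ > 0 and y : [t₀, t₀ + T₁) → ℝ is continuous and satisfies y(t) = α + β(t − t₀) + ∫_{t₀}^t (t − s) b(y(s)) ds for all t ∈ [t₀, t₀ + T₁), then T₁ ≤ T(α,β). -/

import Mathlib

open MeasureTheory Set

/-- `T(α,β) = ∫_α^∞ ds / (β² + 2∫_α^s b(r) dr)^{1/2}`, valued in `[0,∞]`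
(with the convention `1/0 = ∞`, which is irrelevant here since the integrand's
denominator is positive when `β > 0`). -/
noncomputable def blowupTime (b : ℝ → ℝ) (α β : ℝ) : ENNReal :=
  ∫⁻ s in Set.Ioi α, ENNReal.ofReal (1 / Real.sqrt (β ^ 2 + 2 * ∫ r in α..s, b r))

/-- If `y` solves the integral equation on `[t₀, t₀ + T₁)`, then `T₁ ≤ T(α,β)`. -/
theorem blowup_time_lower_bound (b : ℝ → ℝ) (hb : LocallyLipschitz b)
    (hb_nonneg : ∀ x, 0 ≤ b x) (hb_mono : Monotone b)
    (t₀ α β T₁ : ℝ) (hα : 0 < α) (hβ : 0 < β) (hT₁ : 0 < T₁)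
    (y : ℝ → ℝ) (hy_cont : ContinuousOn y (Set.Ico t₀ (t₀ + T₁)))
    (hy_eq : ∀ t ∈ Set.Ico t₀ (t₀ + T₁),
      y t = α + β * (t - t₀) + ∫ s in t₀..t, (t - s) * b (y s)) :
    ENNReal.ofReal T₁ ≤ blowupTime b α β := by
  have hb_cont : Continuous b := hb.continuous
  set T := t₀ + T₁ with hT
  -- continuity of `b ∘ y`
  have hbyc : ContinuousOn (fun s => b (y s)) (Ico t₀ T) :=
    hb_cont.comp_continuousOn hy_cont
  -- interval integrability of `b ∘ y` up to any admissible point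
  have hint : ∀ x, t₀ ≤ x → x < T →
      IntervalIntegrable (fun s => b (y s)) volume t₀ x := by
    intro x h1 h2
    apply ContinuousOn.intervalIntegrable
    rw [uIcc_of_le h1]
    exact hbyc.mono (Icc_subset_Ico_right h2)
  have hint2 : ∀ x, t₀ ≤ x → x < T →
      IntervalIntegrable (fun s => s * b (y s)) volume t₀ x := by
    intro x h1 h2
    apply ContinuousOn.intervalIntegrable
    rw [uIcc_of_le h1]
    exact (continuousOn_id.mul (hbyc.mono (Icc_subset_Ico_right h2)))
  -- the velocity
  set w : ℝ → ℝ := fun x => β + ∫ s in t₀..x, b (y s) with hw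
  -- `y` is differentiable in the interior with derivative `w`
  have hYd : ∀ x ∈ Ioo t₀ T, HasDerivAt y (w x) x := by
    intro x hx
    have hmem : Ico t₀ T ∈ nhds x := Ico_mem_nhds hx.1 hx.2
    have hsm : StronglyMeasurableAtFilter (fun s => b (y s)) (nhds x) volume :=
      (hbyc.mono Ioo_subset_Ico_self).stronglyMeasurableAtFilter isOpen_Ioo x hx
    have hsm2 : StronglyMeasurableAtFilter (fun s => s * b (y s)) (nhds x) volume :=
      ((continuousOn_id.mul hbyc).mono Ioo_subset_Ico_self).stronglyMeasurableAtFilter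
        isOpen_Ioo x hx
    have hca : ContinuousAt (fun s => b (y s)) x :=
      hb_cont.continuousAt.comp (hy_cont.continuousAt hmem)
    have hI1 : HasDerivAt (fun t => ∫ s in t₀..t, b (y s)) (b (y x)) x :=
      intervalIntegral.integral_hasDerivAt_right (hint x hx.1.le hx.2) hsm hca
    have hI2 : HasDerivAt (fun t => ∫ s in t₀..t, s * b (y s)) (x * b (y x)) x :=
      intervalIntegral.integral_hasDerivAt_right (hint2 x hx.1.le hx.2) hsm2
        (continuousAt_id.mul hca)
    have hY : HasDerivAt
        (fun t => α + β * (t - t₀) +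
          (t * (∫ s in t₀..t, b (y s)) - ∫ s in t₀..t, s * b (y s))) (w x) x := by
      have h1 := ((hasDerivAt_id x).mul hI1).sub hI2
      have h2 := (((hasDerivAt_id x).sub_const t₀).const_mul β).const_add α
      have := h2.add h1
      refine this.congr_deriv ?_
      simp only [hw, id_eq]
      ring
    refine hY.congr_of_eventuallyEq ?_
    filter_upwards [hmem] with t ht
    rw [hy_eq t ht]
    have e1 : (∫ s in t₀..t, (t - s) * b (y s))
        = ∫ s in t₀..t, (t * b (y s) - s * b (y s)) := by
      congr 1; ext s; ring
    rw [e1, intervalIntegral.integral_sub ((hint t ht.1 ht.2).const_mul t)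
      (hint2 t ht.1 ht.2), intervalIntegral.integral_const_mul]
  -- Main claim: for any admissible `a₂`, `a₂ - t₀` is bounded by the blow-up time.
  have key : ∀ a₂, t₀ ≤ a₂ → a₂ < T → ENNReal.ofReal (a₂ - t₀) ≤ blowupTime b α β := by
    intro a₂ ha₂l ha₂r
    have hIccIco : Icc t₀ a₂ ⊆ Ico t₀ T := Icc_subset_Ico_right ha₂r
    -- continuity of `w` on `Icc t₀ a₂`
    have hwc : ContinuousOn w (Icc t₀ a₂) := by
      apply continuousOn_const.add
      have hio : IntegrableOn (fun s => b (y s)) (uIcc t₀ a₂) volume := by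
        rw [uIcc_of_le ha₂l]
        exact (hbyc.mono hIccIco).integrableOn_Icc
      have := intervalIntegral.continuousOn_primitive_interval hio
      rwa [uIcc_of_le ha₂l] at this
    -- `w ≥ β` on `Icc t₀ a₂`
    have hw_pos : ∀ x ∈ Icc t₀ a₂, β ≤ w x := by
      intro x hx
      have : 0 ≤ ∫ s in t₀..x, b (y s) :=
        intervalIntegral.integral_nonneg hx.1 (fun s _ => hb_nonneg _)
      simp only [hw]; linarith
    -- `y t₀ = α` and `w t₀ = β`
    have hyt₀ : y t₀ = α := by
      have := hy_eq t₀ ⟨le_refl _, by linarith⟩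
      simpa using this
    have hwt₀ : w t₀ = β := by simp [hw]
    -- the energy identity
    have hE : ∀ x ∈ Icc t₀ a₂, (w x) ^ 2 = β ^ 2 + 2 * ∫ r in α..(y x), b r := by
      set E : ℝ → ℝ := fun t => (w t) ^ 2 - 2 * ∫ r in α..(y t), b r with hEdef
      have hP : Continuous (fun u => ∫ r in α..u, b r) :=
        intervalIntegral.continuous_primitive (fun a c => hb_cont.intervalIntegrable a c) α
      have hEc : ContinuousOn E (Icc t₀ a₂) :=
        (hwc.pow 2).sub (continuousOn_const.mul
          (hP.comp_continuousOn (hy_cont.mono hIccIco)))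
      have hE' : ∀ x ∈ Ioo t₀ a₂, HasDerivAt E 0 x := by
        intro x hx
        have hxT : x ∈ Ioo t₀ T := ⟨hx.1, lt_trans hx.2 ha₂r⟩
        have hw' : HasDerivAt w (b (y x)) x := by
          have hmem : Ico t₀ T ∈ nhds x := Ico_mem_nhds hxT.1 hxT.2
          have hsm : StronglyMeasurableAtFilter (fun s => b (y s)) (nhds x) volume :=
            (hbyc.mono Ioo_subset_Ico_self).stronglyMeasurableAtFilter isOpen_Ioo x hxT
          have hca : ContinuousAt (fun s => b (y s)) x :=
            hb_cont.continuousAt.comp (hy_cont.continuousAt hmem)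
          exact (intervalIntegral.integral_hasDerivAt_right
            (hint x hxT.1.le hxT.2) hsm hca).const_add β
        have hPd : HasDerivAt (fun u => ∫ r in α..u, b r) (b (y x)) (y x) :=
          intervalIntegral.integral_hasDerivAt_right (hb_cont.intervalIntegrable α (y x))
            (hb_cont.stronglyMeasurableAtFilter volume (nhds (y x))) hb_cont.continuousAt
        have hcomp : HasDerivAt (fun t => ∫ r in α..(y t), b r) (b (y x) * w x) x :=
          hPd.comp x (hYd x hxT)
        have := (hw'.pow 2).sub (hcomp.const_mul 2)
        refine this.congr_deriv ?_
        push_cast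
        ring
      have hEconst : ∀ x ∈ Icc t₀ a₂, E x = E t₀ := by
        intro x hx
        rcases eq_or_lt_of_le hx.1 with h | h
        · rw [← h]
        · obtain ⟨c, hc, h0⟩ := exists_hasDerivAt_eq_slope E (fun _ => 0) h
            (hEc.mono (Icc_subset_Icc_right hx.2))
            (fun c hc => hE' c ⟨hc.1, lt_of_lt_of_le hc.2 hx.2⟩)
          have hx0 : x - t₀ ≠ 0 := sub_ne_zero.2 (ne_of_gt h)
          have h0' := h0.symm
          rw [div_eq_zero_iff] at h0'
          rcases h0' with h' | h'
          · linarith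
          · exact absurd h' hx0
      intro x hx
      have := hEconst x hx
      simp only [hEdef, hyt₀, hwt₀, intervalIntegral.integral_same] at this
      linarith [this]
    -- define the regularized integrand
    set g : ℝ → ℝ := fun u => 1 / Real.sqrt (max (β ^ 2 + 2 * ∫ r in α..u, b r) (β ^ 2))
      with hgdef
    have hFc : Continuous (fun u => β ^ 2 + 2 * ∫ r in α..u, b r) :=
      continuous_const.add (continuous_const.mul
        (intervalIntegral.continuous_primitive (fun a c => hb_cont.intervalIntegrable a c) α))
    have hden : ∀ u, 0 < Real.sqrt (max (β ^ 2 + 2 * ∫ r in α..u, b r) (β ^ 2)) :=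
      fun u => Real.sqrt_pos.2 (lt_of_lt_of_le (pow_pos hβ 2) (le_max_right _ _))
    have hgc : Continuous g :=
      continuous_const.div (Real.continuous_sqrt.comp (hFc.max continuous_const))
        (fun u => (hden u).ne')
    have hg_nonneg : ∀ u, 0 ≤ g u := fun u => by positivity
    -- the substitution
    have hsub : (∫ x in t₀..a₂, w x * g (y x)) = ∫ u in (y t₀)..(y a₂), g u := by
      have := intervalIntegral.integral_comp_smul_deriv'' (f := y) (f' := w) (g := g)
        (a := t₀) (b := a₂)
        (by rw [uIcc_of_le ha₂l]; exact hy_cont.mono hIccIco)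
        (by
          rw [min_eq_left ha₂l, max_eq_right ha₂l]
          intro x hx
          exact (hYd x ⟨hx.1, lt_trans hx.2 ha₂r⟩).hasDerivWithinAt)
        (by rw [uIcc_of_le ha₂l]; exact hwc)
        hgc.continuousOn
      simpa [smul_eq_mul] using this
    -- the integrand on the left is identically 1
    have hone : ∀ x ∈ Icc t₀ a₂, w x * g (y x) = 1 := by
      intro x hx
      have h1 : max (β ^ 2 + 2 * ∫ r in α..(y x), b r) (β ^ 2) = (w x) ^ 2 := by
        rw [← hE x hx]
        exact max_eq_left (pow_le_pow_left₀ hβ.le (hw_pos x hx) 2)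
      have hwx : 0 < w x := lt_of_lt_of_le hβ (hw_pos x hx)
      simp only [hgdef, h1, Real.sqrt_sq hwx.le]
      field_simp
    have hleft : (∫ x in t₀..a₂, w x * g (y x)) = a₂ - t₀ := by
      rw [intervalIntegral.integral_congr (g := fun _ => (1 : ℝ))
        (by rw [uIcc_of_le ha₂l]; exact hone)]
      simp
    -- `α ≤ y a₂`
    have hA : α ≤ y a₂ := by
      rw [hy_eq a₂ ⟨ha₂l, ha₂r⟩]
      have h1 : 0 ≤ ∫ s in t₀..a₂, (a₂ - s) * b (y s) :=
        intervalIntegral.integral_nonneg ha₂l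
          (fun s hs => mul_nonneg (by linarith [hs.2]) (hb_nonneg _))
      nlinarith
    -- put everything together
    have e1 : a₂ - t₀ = ∫ u in Ioc α (y a₂), g u := by
      rw [← hleft, hsub, hyt₀, intervalIntegral.integral_of_le hA]
    rw [e1]
    have hgint : IntegrableOn g (Ioc α (y a₂)) volume :=
      (hgc.integrableOn_Icc).mono_set Ioc_subset_Icc_self
    rw [MeasureTheory.ofReal_integral_eq_lintegral_ofReal hgint
      (Filter.Eventually.of_forall fun u => hg_nonneg u)]
    have e2 : (∫⁻ u in Ioc α (y a₂), ENNReal.ofReal (g u))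
        = ∫⁻ u in Ioc α (y a₂),
            ENNReal.ofReal (1 / Real.sqrt (β ^ 2 + 2 * ∫ r in α..u, b r)) := by
      apply MeasureTheory.setLIntegral_congr_fun measurableSet_Ioc
      refine fun u hu => ?_
      have : 0 ≤ ∫ r in α..u, b r :=
        intervalIntegral.integral_nonneg hu.1.le (fun r _ => hb_nonneg _)
      simp only [hgdef, max_eq_left (by nlinarith : β ^ 2 ≤ β ^ 2 + 2 * ∫ r in α..u, b r)]
    rw [e2]
    exact lintegral_mono_set Ioc_subset_Ioi_self
  -- conclude by letting `a₂ → t₀ + T₁`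
  refine ENNReal.le_of_forall_pos_le_add fun ε hε _ => ?_
  set δ := min (T₁ / 2) ((ε : ℝ) / 2) with hδ
  have hεpos : (0 : ℝ) < ε := hε
  have hδpos : 0 < δ := lt_min (by linarith) (by linarith)
  have hδle : δ ≤ T₁ / 2 := min_le_left _ _
  have h1 := key (t₀ + (T₁ - δ)) (by linarith) (by rw [hT]; linarith)
  have h2 : ENNReal.ofReal δ ≤ (ε : ENNReal) := by
    rw [← ENNReal.ofReal_coe_nnreal]
    exact ENNReal.ofReal_le_ofReal (le_trans (min_le_right _ _) (by linarith))
  calc ENNReal.ofReal T₁ = ENNReal.ofReal (T₁ - δ) + ENNReal.ofReal δ := by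
        rw [← ENNReal.ofReal_add (by linarith) hδpos.le]; ring_nf
    _ ≤ blowupTime b α β + ε := by
        refine add_le_add ?_ h2
        have : t₀ + (T₁ - δ) - t₀ = T₁ - δ := by ring
        rwa [this] at h1
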